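/- Let V be a normal supervisor on the plant G, let the attack constraint be normal (Σ_{c,A} ⊆ Σ_{o,A}), and let (s, σ) be an attack pair. Then there exists an enabling attacker A such that A(P̂(P_o(s))) = (V(P_o(s)) ∩ Σ_{c,A}) ∪ {σ}, A(P̂(w)) = V(w) ∩ Σ_{c,A} for every w ∈ P_o(L(V/G)) with P̂(w) ≠ P̂(P_o(s)), and A is successful; moreover, for this A, ∅ ≠ L(V_A/G) \ L(V/G) ⊆ L_dmg. -/
import Mathlib


open scoped Classical

namespace ActuatorAttack

variable {A : Type*}

/-- Natural projection onto a sub-alphabet `S`: erase the letters not in `S`. -/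
noncomputable def proj (S : Set A) (l : List A) : List A :=
  l.filter (fun a => decide (a ∈ S))

/-- The least language containing `ε` and closed under appending an event `σ`
allowed by `allow` at `s`, provided the result lies in the plant language `LG`. -/
inductive Lang (LG : Set (List A)) (allow : List A → Set A) : List A → Prop
  | nil : Lang LG allow []
  | snoc {s : List A} {σ : A} : Lang LG allow s → σ ∈ allow s →
      (s ++ [σ]) ∈ LG → Lang LG allow (s ++ [σ])

/-- The closed-loop language `L(V/G)`. -/
def LVG (LG : Set (List A)) (So : Set A) (V : List A → Set A) :
    Set (List A) :=
  {s | Lang LG (fun t => V (proj So t)) s}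

/-- Auxiliary function for the attacker-observation map: `pre` is the prefix
of the supervisor observation sequence already processed. -/
noncomputable def phatAux (V : List A → Set A) (SoA : Set A) :
    List A → List A → List (List A × Set A)
  | _, [] => []
  | pre, σ :: rest =>
      (proj SoA [σ], V (pre ++ [σ])) :: phatAux V SoA (pre ++ [σ]) rest

/-- The attacker-observation map `P̂`: the i-th letter of `P̂(σ₁⋯σₙ)` is
`(P_{o,A}(σᵢ), V(σ₁⋯σᵢ))`. -/
noncomputable def phat (V : List A → Set A) (SoA : Set A) (w : List A) :
    List (List A × Set A) :=
  phatAux V SoA [] w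

/-- The attacked supervisor `V_A`. -/
noncomputable def VA (V : List A → Set A) (ScA SoA : Set A)
    (Att : List (List A × Set A) → Set A) (w : List A) : Set A :=
  (V w \ ScA) ∪ Att (phat V SoA w)

/-- The attacked closed-loop language `L(V_A/G)`. -/
def LVAG (LG : Set (List A)) (So : Set A) (V : List A → Set A)
    (ScA SoA : Set A) (Att : List (List A × Set A) → Set A) : Set (List A) :=
  {s | Lang LG (fun t =>
      {σ | proj So t ∈ proj So '' LVG LG So V ∧
           σ ∈ VA V ScA SoA Att (proj So t)}) s}

/-- An attacker is enabling if it enables every attackable event enabled by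
the supervisor. -/
def Enabling (LG : Set (List A)) (So : Set A) (V : List A → Set A)
    (ScA SoA : Set A) (Att : List (List A × Set A) → Set A) : Prop :=
  ∀ w ∈ proj So '' LVG LG So V, V w ∩ ScA ⊆ Att (phat V SoA w)

/-- An attacker is successful if the attacked closed-loop language meets the
damage set, and everything outside `P_o⁻¹(P_o(L(V/G)))` lies in `L_dmg·Σ*`. -/
def Successful (LG : Set (List A)) (So : Set A) (V : List A → Set A)
    (ScA SoA : Set A) (Att : List (List A × Set A) → Set A)
    (Ldmg : Set (List A)) : Prop :=
  (LVAG LG So V ScA SoA Att ∩ Ldmg).Nonempty ∧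
  LVAG LG So V ScA SoA Att \ (proj So ⁻¹' (proj So '' LVG LG So V)) ⊆
    {t | ∃ d ∈ Ldmg, d <+: t}

/-- `(s, σ)` is an attack pair. -/
def AttackPair (LG : Set (List A)) (So : Set A) (V : List A → Set A)
    (ScA SoA : Set A) (Ldmg : Set (List A)) (s : List A) (σ : A) : Prop :=
  s ∈ LVG LG So V ∧ σ ∈ ScA ∧ s ++ [σ] ∈ Ldmg ∧
  ∀ s' ∈ LVG LG So V,
    phat V SoA (proj So s) = phat V SoA (proj So s') →
    s' ++ [σ] ∈ LG → s' ++ [σ] ∈ Ldmg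

/-- `En(s, σ)`: one-step `σ`-extensions in `L(G)` of strings of `L(V/G)` that
are attacker-observation equivalent to `s`. -/
def En (LG : Set (List A)) (So : Set A) (V : List A → Set A)
    (SoA : Set A) (s : List A) (σ : A) : Set (List A) :=
  {t | ∃ s' ∈ LVG LG So V, t = s' ++ [σ] ∧ t ∈ LG ∧
       phat V SoA (proj So s) = phat V SoA (proj So s')}

/-- `I(ŵ)`: attackable events `σ` such that some string `s'` of `L(V/G)` with
attacker observation `ŵ` forms an attack pair `(s', σ)`. -/
def ISet (LG : Set (List A)) (So : Set A) (V : List A → Set A)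
    (ScA SoA : Set A) (Ldmg : Set (List A))
    (w : List (List A × Set A)) : Set A :=
  {σ | σ ∈ ScA ∧ ∃ s' ∈ LVG LG So V,
        phat V SoA (proj So s') = w ∧ AttackPair LG So V ScA SoA Ldmg s' σ}

/-- The supremal attacker `A^sup`. -/
def Asup (LG : Set (List A)) (So : Set A) (V : List A → Set A)
    (ScA SoA : Set A) (Ldmg : Set (List A))
    (w : List (List A × Set A)) : Set A :=
  {σ | ∃ s ∈ LVG LG So V, phat V SoA (proj So s) = w ∧
        σ ∈ V (proj So s) ∩ ScA} ∪
  ISet LG So V ScA SoA Ldmg w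


lemma phatAux_nil (V : List A → Set A) (SoA : Set A) (pre : List A) :
    phatAux V SoA pre [] = [] := rfl

lemma phatAux_cons (V : List A → Set A) (SoA : Set A) (pre : List A) (σ : A) (rest : List A) :
    phatAux V SoA pre (σ :: rest) =
      (proj SoA [σ], V (pre ++ [σ])) :: phatAux V SoA (pre ++ [σ]) rest := rfl

lemma V_eq_of_phatAux (V : List A → Set A) (SoA : Set A) :
    ∀ (l l' pre pre' : List A), phatAux V SoA pre l = phatAux V SoA pre' l' →
      (l = [] ∧ l' = []) ∨ V (pre ++ l) = V (pre' ++ l') := by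
  intro l
  induction l with
  | nil =>
    intro l' pre pre' h
    cases l' with
    | nil => exact Or.inl ⟨rfl, rfl⟩
    | cons a t => simp [phatAux_nil, phatAux_cons] at h
  | cons a t ih =>
    intro l' pre pre' h
    cases l' with
    | nil => simp [phatAux_nil, phatAux_cons] at h
    | cons a' t' =>
      rw [phatAux_cons, phatAux_cons] at h
      injection h with h1 h2
      have hV : V (pre ++ [a]) = V (pre' ++ [a']) := congrArg Prod.snd h1
      rcases ih t' (pre ++ [a]) (pre' ++ [a']) h2 with ⟨rfl, rfl⟩ | h3
      · exact Or.inr (by simpa using hV)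
      · refine Or.inr ?_
        have : pre ++ a :: t = (pre ++ [a]) ++ t := by simp
        rw [this, h3]; simp

lemma V_eq_of_phat {V : List A → Set A} {SoA : Set A} {w w' : List A}
    (h : phat V SoA w = phat V SoA w') : V w = V w' := by
  rcases V_eq_of_phatAux V SoA w w' [] [] h with ⟨rfl, rfl⟩ | h2
  · rfl
  · simpa using h2

lemma proj_append (S : Set A) (l l' : List A) :
    proj S (l ++ l') = proj S l ++ proj S l' := by simp [proj]

lemma proj_singleton_mem {S : Set A} {σ : A} (h : σ ∈ S) : proj S [σ] = [σ] := by
  simp [proj, h]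

lemma Lang_mem {LG : Set (List A)} {allow : List A → Set A} (hnil : [] ∈ LG)
    {t : List A} (h : Lang LG allow t) : t ∈ LG := by
  cases h with
  | nil => exact hnil
  | snoc _ _ hg => exact hg

lemma Lang_prefix {LG : Set (List A)} {allow : List A → Set A} :
    ∀ {t : List A}, Lang LG allow t → ∀ u r : List A, t = u ++ r → Lang LG allow u := by
  intro t ht
  induction ht with
  | nil =>
    intro u r h
    rcases List.append_eq_nil_iff.mp h.symm with ⟨rfl, rfl⟩
    exact Lang.nil
  | snoc hs hσ hg ih =>
    intro u r h
    induction r using List.reverseRecOn with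
    | nil =>
      rw [List.append_nil] at h
      rw [← h]
      exact Lang.snoc hs hσ hg
    | append_singleton r₀ b _ =>
      rw [← List.append_assoc] at h
      have h1 := List.append_inj' h rfl
      exact ih u r₀ h1.1

/-- Decomposition: if the projection ends with `σ ∈ S`, split the string there. -/
lemma proj_decomp {S : Set A} {σ : A} (hσ : σ ∈ S) :
    ∀ (v x : List A), proj S v = x ++ [σ] →
      ∃ v₁ v₂ : List A, v = v₁ ++ σ :: v₂ ∧ proj S v₁ = x ∧ proj S v₂ = [] := by
  intro v
  induction v using List.reverseRecOn with
  | nil => intro x h; simp [proj] at h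
  | append_singleton v' a ih =>
    intro x h
    rw [proj_append] at h
    by_cases ha : a ∈ S
    · rw [proj_singleton_mem ha] at h
      obtain ⟨h2, h3⟩ := List.append_inj' h rfl
      have h4 : a = σ := by simpa using h3
      subst h4
      exact ⟨v', [], by simp, h2, rfl⟩
    · have hpa : proj S [a] = [] := by simp [proj, ha]
      rw [hpa, List.append_nil] at h
      obtain ⟨v₁, v₂, rfl, h2, h3⟩ := ih x h
      refine ⟨v₁, v₂ ++ [a], by simp, h2, ?_⟩
      rw [proj_append, h3]
      simpa [proj] using ha

/-- From an attack pair `(s, σ)` one can build an enabling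
attacker that attacks exactly at `P̂(P_o(s))` with event `σ`, and this
attacker is successful with `∅ ≠ L(V_A/G) \ L(V/G) ⊆ L_dmg`. -/
theorem stmt_9 {A : Type*} [Fintype A] (So Sc : Set A) (LG : Set (List A))
    (hnil : [] ∈ LG) (hpref : ∀ s t : List A, s <+: t → t ∈ LG → s ∈ LG)
    (V : List A → Set A) (hV : ∀ w, Scᶜ ⊆ V w)
    (hnormV : Sc ⊆ So)
    (ScA SoA : Set A) (hcA : ScA ⊆ Sc) (hoA : SoA ⊆ So)
    (hnormA : ScA ⊆ SoA)
    (Ldmg : Set (List A)) (hLd : Ldmg ⊆ LG)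
    (hLdV : Ldmg ∩ LVG LG So V = ∅)
    (s : List A) (σ : A)
    (hap : AttackPair LG So V ScA SoA Ldmg s σ) :
    ∃ Att : List (List A × Set A) → Set A, (∀ x, Att x ⊆ ScA) ∧
      Enabling LG So V ScA SoA Att ∧
      Att (phat V SoA (proj So s)) = (V (proj So s) ∩ ScA) ∪ {σ} ∧
      (∀ w ∈ proj So '' LVG LG So V,
        phat V SoA w ≠ phat V SoA (proj So s) →
        Att (phat V SoA w) = V w ∩ ScA) ∧
      Successful LG So V ScA SoA Att Ldmg ∧
      (LVAG LG So V ScA SoA Att \ LVG LG So V).Nonempty ∧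
      LVAG LG So V ScA SoA Att \ LVG LG So V ⊆ Ldmg := by
  classical
  obtain ⟨hsLVG, hσScA, hsσdmg, hAP⟩ := hap
  set Att : List (List A × Set A) → Set A := fun x =>
    {τ | τ ∈ ScA ∧ ∃ w, phat V SoA w = x ∧ τ ∈ V w} ∪
    {τ | x = phat V SoA (proj So s) ∧ τ = σ} with hAtt
  have hAttSub : ∀ x, Att x ⊆ ScA := by
    intro x τ hτ
    rcases hτ with ⟨h1, _⟩ | ⟨_, rfl⟩
    exacts [h1, hσScA]
  have hAttmem : ∀ w τ, τ ∈ ScA → τ ∈ V w → τ ∈ Att (phat V SoA w) :=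
    fun w τ h1 h2 => Or.inl ⟨h1, w, rfl, h2⟩
  have hσSo : σ ∈ So := hoA (hnormA hσScA)
  have hdisj : ∀ t, t ∈ Ldmg → t ∉ LVG LG So V := by
    intro t h1 h2
    have ht : t ∈ Ldmg ∩ LVG LG So V := ⟨h1, h2⟩
    rw [hLdV] at ht
    exact ht
  have hblock : ∀ s' : List A, s' ∈ LVG LG So V →
      phat V SoA (proj So s) = phat V SoA (proj So s') →
      proj So s' ++ [σ] ∉ proj So '' LVG LG So V := by
    rintro s' hs' hph ⟨v, hv, hproj⟩
    obtain ⟨v₁, v₂, rfl, hp1, hp2⟩ := proj_decomp hσSo v (proj So s') hproj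
    have hv1σ : (v₁ ++ [σ]) ∈ LVG LG So V :=
      Lang_prefix hv (v₁ ++ [σ]) v₂ (by simp)
    have hv1 : v₁ ∈ LVG LG So V := Lang_prefix hv v₁ (σ :: v₂) rfl
    have hph2 : phat V SoA (proj So s) = phat V SoA (proj So v₁) := by rw [hph, hp1]
    exact hdisj _ (hAP v₁ hv1 hph2 (Lang_mem hnil hv1σ)) hv1σ
  have hsub : ∀ t, t ∈ LVG LG So V → t ∈ LVAG LG So V ScA SoA Att := by
    intro t ht
    induction ht with
    | nil => exact Lang.nil
    | @snoc u τ hu hτ hg ih =>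
      refine Lang.snoc ih ⟨⟨u, hu, rfl⟩, ?_⟩ hg
      by_cases hc : τ ∈ ScA
      · exact Or.inr (hAttmem _ _ hc hτ)
      · exact Or.inl ⟨hτ, hc⟩
  have hinv : ∀ t, t ∈ LVAG LG So V ScA SoA Att →
      t ∈ LVG LG So V ∨
      ∃ s', s' ∈ LVG LG So V ∧
        phat V SoA (proj So s) = phat V SoA (proj So s') ∧
        t = s' ++ [σ] ∧ t ∈ Ldmg := by
    intro t ht
    induction ht with
    | nil => exact Or.inl Lang.nil
    | @snoc u τ hu hall hg ih =>
      obtain ⟨himg, hva⟩ := hall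
      rcases ih with hU | ⟨s', hs', hph, rfl, hdmg⟩
      · rcases hva with ⟨hτV, _⟩ | hatt
        · exact Or.inl (Lang.snoc hU hτV hg)
        · rcases hatt with ⟨hτSc, w, hw, hτVw⟩ | ⟨hx, rfl⟩
          · exact Or.inl (Lang.snoc hU ((V_eq_of_phat hw) ▸ hτVw) hg)
          · exact Or.inr ⟨u, hU, hx.symm, rfl, hAP u hU hx.symm hg⟩
      · exfalso
        have hps : proj So (s' ++ [σ]) = proj So s' ++ [σ] := by
          rw [proj_append, proj_singleton_mem hσSo]
        rw [hps] at himg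
        exact hblock s' hs' hph himg
  have hAttS : Att (phat V SoA (proj So s)) = (V (proj So s) ∩ ScA) ∪ {σ} := by
    ext τ
    constructor
    · rintro (⟨h1, w, hw, h2⟩ | ⟨_, rfl⟩)
      · exact Or.inl ⟨(V_eq_of_phat hw) ▸ h2, h1⟩
      · exact Or.inr rfl
    · rintro (⟨h1, h2⟩ | rfl)
      · exact Or.inl ⟨h2, proj So s, rfl, h1⟩
      · exact Or.inr ⟨rfl, rfl⟩
  have hAttO : ∀ w, w ∈ proj So '' LVG LG So V →
      phat V SoA w ≠ phat V SoA (proj So s) →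
      Att (phat V SoA w) = V w ∩ ScA := by
    intro w _ hne
    ext τ
    constructor
    · rintro (⟨h1, w', hw', h2⟩ | ⟨hx, rfl⟩)
      · exact ⟨(V_eq_of_phat hw') ▸ h2, h1⟩
      · exact absurd hx hne
    · rintro ⟨h1, h2⟩
      exact Or.inl ⟨h2, w, rfl, h1⟩
  have hkey : s ++ [σ] ∈ LVAG LG So V ScA SoA Att :=
    Lang.snoc (hsub s hsLVG) ⟨⟨s, hsLVG, rfl⟩, Or.inr (Or.inr ⟨rfl, rfl⟩)⟩ (hLd hsσdmg)
  refine ⟨Att, hAttSub, fun w _ τ hτ => hAttmem w τ hτ.2 hτ.1, hAttS, hAttO,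
    ⟨⟨s ++ [σ], hkey, hsσdmg⟩, ?_⟩, ⟨s ++ [σ], hkey, hdisj _ hsσdmg⟩, ?_⟩
  · rintro t ⟨ht, hnt⟩
    rcases hinv t ht with hL | ⟨s', _, _, rfl, hd⟩
    · exact absurd ⟨t, hL, rfl⟩ hnt
    · exact ⟨_, hd, List.prefix_refl _⟩
  · rintro t ⟨ht, hnt⟩
    rcases hinv t ht with hL | ⟨_, _, _, rfl, hd⟩
    · exact absurd hL hnt
    · exact hd

end ActuatorAttack
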